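/- Let S be a C-semigroup that is a P-semigroup (with respect to a monomial order ⪯ with finite lower sets), with S ≠ Δ(Fb(S)), i.e., S is not ordinary, and let m(S) = min_⪯(S \ {0}). Then S \ {m(S)} is a P-semigroup with the same Frobenius element as S. -/
import Mathlib


/-- A monomial order on `ℕ^d`: a total order compatible with addition,
with `0` as least element. -/
def IsMonomialOrder (d : ℕ) (le : (Fin d → ℕ) → (Fin d → ℕ) → Prop) : Prop :=
  (∀ a, le a a) ∧ (∀ a b, le a b → le b a → a = b) ∧
  (∀ a b c, le a b → le b c → le a c) ∧ (∀ a b, le a b ∨ le b a) ∧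
  (∀ a b c, le a b → le (a + c) (b + c)) ∧ (∀ a, le 0 a)

/-- `S` is a `C`-semigroup: a submonoid of the cone `C` with finite complement in `C`. -/
def IsCSgp {d : ℕ} (C : AddSubmonoid (Fin d → ℕ)) (S : Set (Fin d → ℕ)) : Prop :=
  0 ∈ S ∧ (∀ x ∈ S, ∀ y ∈ S, x + y ∈ S) ∧ S ⊆ (C : Set (Fin d → ℕ)) ∧
    ((C : Set (Fin d → ℕ)) \ S).Finite

/-- `S` is a `P`-semigroup: for every nonzero `s ∈ S` there is `p ∈ P` with `s + p ∈ S`. -/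
def IsPSgp {d : ℕ} (P : Set (Fin d → ℕ)) (S : Set (Fin d → ℕ)) : Prop :=
  ∀ s ∈ S, s ≠ 0 → ∃ p ∈ P, s + p ∈ S

/-- `a` is a minimal generator of `S`. -/
def IsMinGen {d : ℕ} (S : Set (Fin d → ℕ)) (a : Fin d → ℕ) : Prop :=
  a ∈ S ∧ a ≠ 0 ∧ ¬ ∃ x ∈ S, ∃ y ∈ S, x ≠ 0 ∧ y ≠ 0 ∧ a = x + y

theorem stmt_7 {d : ℕ} (C : AddSubmonoid (Fin d → ℕ)) (hCfg : C.FG)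
    (P : Set (Fin d → ℕ)) (hPfin : P.Finite) (hP0 : (0 : Fin d → ℕ) ∉ P)
    (le : (Fin d → ℕ) → (Fin d → ℕ) → Prop) (hle : IsMonomialOrder d le)
    (hlow : ∀ f ∈ (C : Set (Fin d → ℕ)),
      {x ∈ (C : Set (Fin d → ℕ)) | le x f ∧ x ≠ f}.Finite)
    (S : Set (Fin d → ℕ)) (hS : IsCSgp C S) (hSP : IsPSgp P S)
    (Fb : Fin d → ℕ) (hFb : Fb ∈ (C : Set (Fin d → ℕ)) \ S)
    (hFbmax : ∀ x ∈ (C : Set (Fin d → ℕ)) \ S, le x Fb)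
    (hnotord : S ≠ ({x ∈ (C : Set (Fin d → ℕ)) | le Fb x ∧ x ≠ Fb} ∪ {0}))
    (m : Fin d → ℕ) (hmS : m ∈ S) (hm0 : m ≠ 0)
    (hmmin : ∀ s ∈ S, s ≠ 0 → le m s) :
    IsCSgp C (S \ {m}) ∧ IsPSgp P (S \ {m}) ∧
      Fb ∈ (C : Set (Fin d → ℕ)) \ (S \ {m}) ∧
      ∀ x ∈ (C : Set (Fin d → ℕ)) \ (S \ {m}), le x Fb := by

  obtain ⟨hrefl, hanti, htrans, htot, hadd, hzero⟩ := hle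
  obtain ⟨h0S, hclosed, hsub, hfin⟩ := hS
  -- a ⪯ a + b
  have key : ∀ a b : Fin d → ℕ, le a (a + b) := by
    intro a b
    have := hadd 0 b a (hzero b)
    simpa [add_comm] using this
  -- if m ⪯ x and y ≠ 0, then x + y ≠ m
  have sumne : ∀ x y : Fin d → ℕ, le m x → y ≠ 0 → x + y ≠ m := by
    intro x y hmx hy h
    have h1 : le (m + y) m := by
      have := hadd m x y hmx; rwa [h] at this
    have h2 : le m (m + y) := key m y
    have : m + y = m := hanti _ _ h1 h2
    exact hy (by simpa using (add_eq_left.mp this))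
  -- m ⪯ Fb
  have hmFb : le m Fb := by
    by_contra hc
    have hFbm : le Fb m := (htot m Fb).resolve_left hc
    apply hnotord
    ext x
    constructor
    · intro hx
      by_cases hx0 : x = 0
      · exact Or.inr hx0
      · refine Or.inl ⟨hsub hx, htrans _ _ _ hFbm (hmmin x hx hx0), ?_⟩
        intro h; exact hFb.2 (h ▸ hx)
    · rintro (⟨hxC, hFx, hxF⟩ | hx0)
      · by_contra hxS
        exact hxF (hanti _ _ (hFbmax x ⟨hxC, hxS⟩) hFx)
      · simp only [Set.mem_singleton_iff] at hx0
        exact hx0 ▸ h0S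
  refine ⟨⟨⟨h0S, fun h => hm0 (Set.mem_singleton_iff.mp h).symm⟩, ?_, ?_, ?_⟩, ?_, ?_, ?_⟩
  · rintro x ⟨hxS, hxm⟩ y ⟨hyS, hym⟩
    refine ⟨hclosed x hxS y hyS, ?_⟩
    by_cases hx0 : x = 0
    · subst hx0; simpa using hym
    by_cases hy0 : y = 0
    · subst hy0; simpa using hxm
    exact sumne x y (hmmin x hxS hx0) hy0
  · exact fun x hx => hsub hx.1
  · apply Set.Finite.subset (hfin.union (Set.finite_singleton m))
    intro x ⟨hxC, hx⟩
    by_cases hxS : x ∈ S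
    · right
      by_contra h
      exact hx ⟨hxS, h⟩
    · exact Or.inl ⟨hxC, hxS⟩
  · intro s ⟨hsS, hsm⟩ hs0
    obtain ⟨p, hpP, hsp⟩ := hSP s hsS hs0
    refine ⟨p, hpP, hsp, ?_⟩
    have hp0 : p ≠ 0 := fun h => hP0 (h ▸ hpP)
    exact sumne s p (hmmin s hsS hs0) hp0
  · exact ⟨hFb.1, fun h => hFb.2 h.1⟩
  · intro x ⟨hxC, hx⟩
    by_cases hxS : x ∈ S
    · by_cases hxm : x = m
      · exact hxm ▸ hmFb
      · exact absurd ⟨hxS, hxm⟩ hx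
    · exact hFbmax x ⟨hxC, hxS⟩
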